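/- Let F_81 be the field with 81 elements and F_3 its prime subfield. Let N = {(λ, λ^{-1}·I_2) : λ ∈ F_3^×}, a subgroup of the direct product F_81^× × GL_2(F_3). Then the quotient group (F_81^× × GL_2(F_3))/N is not isomorphic to the direct product (F_81^×/F_3^×) × GL_2(F_3). -/

import Mathlib

open Matrix
open scoped MatrixGroups

/-- The homomorphism `F_3^× → K^× × GL_2(F_3)`, `λ ↦ (λ, λ⁻¹ • I_2)`, where `K` is the
field with 81 elements and `F_3 = ZMod 3` its prime field. -/
def psi81 (K : Type*) [Field K] [CharP K 3] :
    (ZMod 3)ˣ →* Kˣ × GL (Fin 2) (ZMod 3) :=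
  (Units.map (ZMod.castHom (dvd_refl 3) K).toMonoidHom).prod
    ((Units.map (algebraMap (ZMod 3) (Matrix (Fin 2) (Fin 2) (ZMod 3))).toMonoidHom).comp
      invMonoidHom)

/-- The subgroup `N = {(λ, λ⁻¹ I_2) : λ ∈ F_3^×} ≤ F_81^× × GL_2(F_3)`. -/
def N81 (K : Type*) [Field K] [CharP K 3] : Subgroup (Kˣ × GL (Fin 2) (ZMod 3)) :=
  (psi81 K).range

instance N81_normal (K : Type*) [Field K] [CharP K 3] : (N81 K).Normal := by
  constructor
  intro n hn g
  obtain ⟨lam, rfl⟩ := hn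
  have hcomm : psi81 K lam * g = g * psi81 K lam := by
    apply Prod.ext
    · exact mul_comm _ _
    · apply Units.ext
      show ((psi81 K lam).2 : Matrix (Fin 2) (Fin 2) (ZMod 3)) * (g.2 : Matrix (Fin 2) (Fin 2) (ZMod 3))
        = (g.2 : Matrix (Fin 2) (Fin 2) (ZMod 3)) * ((psi81 K lam).2 : Matrix (Fin 2) (Fin 2) (ZMod 3))
      have : ((psi81 K lam).2 : Matrix (Fin 2) (Fin 2) (ZMod 3))
          = algebraMap (ZMod 3) (Matrix (Fin 2) (Fin 2) (ZMod 3)) ((lam⁻¹ : (ZMod 3)ˣ) : ZMod 3) := rfl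
      rw [this]
      exact Algebra.commutes _ _
  have : g * psi81 K lam * g⁻¹ = psi81 K lam := by
    rw [← hcomm]; group
  rw [this]
  exact ⟨lam, rfl⟩

/-- The image of `F_3^×` in `F_81^×`. -/
def F3units (K : Type*) [Field K] [CharP K 3] : Subgroup Kˣ :=
  (Units.map (ZMod.castHom (dvd_refl 3) K).toMonoidHom).range

set_option maxHeartbeats 2000000 in
set_option maxRecDepth 10000 in
lemma gl_pow24 : ∀ g : GL (Fin 2) (ZMod 3), g ^ 24 = 1 := by decide

/-- **Berger's claimed isomorphism fails (Example 3.3).**  For `K = F_81`, the quotient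
`(F_81^× × GL_2(F_3))/N`, with `N = {(λ, λ⁻¹ I_2) : λ ∈ F_3^×}`, is not isomorphic to the
direct product `(F_81^×/F_3^×) × GL_2(F_3)`. -/
theorem quotient_not_iso_product
    (K : Type*) [Field K] [Fintype K] [CharP K 3] (hK : Fintype.card K = 81) :
    IsEmpty (((Kˣ × GL (Fin 2) (ZMod 3)) ⧸ N81 K) ≃*
      ((Kˣ ⧸ F3units K) × GL (Fin 2) (ZMod 3))) := by
  haveI : Fact (Nat.Prime 3) := ⟨by norm_num⟩
  classical
  constructor
  intro e
  -- card of units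
  have hcardU : Fintype.card Kˣ = 80 := by
    rw [Fintype.card_units, hK]
  obtain ⟨g, hg⟩ := IsCyclic.exists_generator (α := Kˣ)
  have hordg : orderOf g = 80 := by
    rw [orderOf_eq_card_of_forall_mem_zpowers hg, Nat.card_eq_fintype_card, hcardU]
  -- the element of order 80 in the quotient
  set q : (Kˣ × GL (Fin 2) (ZMod 3)) ⧸ N81 K :=
    QuotientGroup.mk ((g, 1) : Kˣ × GL (Fin 2) (ZMod 3)) with hq
  have hinjK : Function.Injective (Units.map (ZMod.castHom (dvd_refl 3) K).toMonoidHom) :=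
    Units.map_injective (ZMod.castHom (dvd_refl 3) K).injective
  have hinjM : Function.Injective
      (Units.map (algebraMap (ZMod 3) (Matrix (Fin 2) (Fin 2) (ZMod 3))).toMonoidHom) :=
    Units.map_injective (algebraMap (ZMod 3) (Matrix (Fin 2) (Fin 2) (ZMod 3))).injective
  have key : ∀ n : ℕ, q ^ n = 1 → 80 ∣ n := by
    intro n hn
    have : ((g, 1) : Kˣ × GL (Fin 2) (ZMod 3)) ^ n ∈ N81 K := by
      rw [← QuotientGroup.eq_one_iff]
      exact hn
    obtain ⟨lam, hlam⟩ := this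
    have h2 : (Units.map (algebraMap (ZMod 3) (Matrix (Fin 2) (Fin 2) (ZMod 3))).toMonoidHom)
        lam⁻¹ = 1 := by
      have := congrArg Prod.snd hlam
      simpa [psi81, Prod.pow_def] using this
    have hlam1 : lam = 1 := by
      have : lam⁻¹ = 1 := hinjM (by simpa using h2)
      simpa using congrArg (·⁻¹) this
    have h1 : g ^ n = 1 := by
      have := congrArg Prod.fst hlam
      simp [psi81, Prod.pow_def, hlam1] at this
      simpa using this.symm
    rw [← hordg]
    exact orderOf_dvd_of_pow_eq_one h1
  have hordq : orderOf q = 80 := by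
    apply Nat.dvd_antisymm
    · apply orderOf_dvd_of_pow_eq_one
      rw [hq, ← QuotientGroup.mk_pow, Prod.pow_def]
      have : g ^ 80 = 1 := by rw [← hordg]; exact pow_orderOf_eq_one g
      simp [this]
      exact (N81 K).one_mem
    · exact key _ (pow_orderOf_eq_one q)
  -- transport through e
  have hord : orderOf (e q) = 80 := by
    simpa [hordq] using orderOf_injective e.toMonoidHom e.injective q
  -- card of the quotient Kˣ ⧸ F3units K
  have hcardF3 : Nat.card (F3units K) = 2 := by
    have : Nat.card (F3units K) = Nat.card (ZMod 3)ˣ :=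
      (Nat.card_congr (MonoidHom.ofInjective hinjK).toEquiv).symm
    rw [this, Nat.card_eq_fintype_card, ZMod.card_units_eq_totient]
    decide
  have hcardQ : Nat.card (Kˣ ⧸ F3units K) = 40 := by
    have h := Subgroup.card_eq_card_quotient_mul_card_subgroup (F3units K)
    rw [hcardF3, Nat.card_eq_fintype_card, hcardU] at h
    omega
  -- orders of the two components
  have h1 : orderOf (e q).1 ∣ 40 := hcardQ ▸ orderOf_dvd_natCard (e q).1
  have h2 : orderOf (e q).2 ∣ 24 := orderOf_dvd_of_pow_eq_one (gl_pow24 (e q).2)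
  have hlcm : orderOf (e q) = Nat.lcm (orderOf (e q).1) (orderOf (e q).2) := Prod.orderOf _
  have : (80 : ℕ) ∣ 120 := by
    rw [← hord, hlcm]
    exact Nat.lcm_dvd (h1.trans (by norm_num)) (h2.trans (by norm_num))
  norm_num at this
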